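/- Assume Î ≠ ∅ and that for every i ∈ Î the number ε_i > 0 is small enough that d + ε_i ≤ x_i^max and (w_i + c_i(y))/y > ∂₊c_i(y) for all y ∈ (0, d + ε_i]. Let Î_min(ε) = {i ∈ Î : (w_i + c_i(d+ε_i))/(d+ε_i) = min_{j ∈ Î} (w_j + c_j(d+ε_j))/(d+ε_j)}. Then for any subset S ⊆ Î such that Î \ S contains at least one element of Î_min(ε), the set of maximizers of p ↦ p·d − Σ_{i ∈ Ī} π_i(p) − Σ_{i ∈ Î \ S} π̂_i(p,ε_i) equals P̄⁺(ε); i.e., removing any group of LNMGUs from the dual problem, provided at least one LNMGU from Î_min(ε) remains, does not change the set of market prices. -/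
import Mathlib


noncomputable section

/-- Feasible set of a single generator with capacity `xmax`. -/
def Gen (xmax : ℝ) : Set (ℝ × ℝ) :=
  {ux | (ux.1 = 0 ∨ ux.1 = 1) ∧ 0 ≤ ux.2 ∧ ux.2 ≤ ux.1 * xmax}

/-- Cost of a generator. -/
def Cost (w : ℝ) (c : ℝ → ℝ) (ux : ℝ × ℝ) : ℝ := w * ux.1 + c ux.2

/-- Upper bound `x^c,max` of possible output volumes of generator `i`. -/
def xcmax (n : ℕ) (xmax : Fin n → ℝ) (d : ℝ) (i : Fin n) : ℝ :=
  min d (xmax i)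

/-- The relaxed modified feasible set `Ĝ_i(ε)`. -/
def Ghat (xmax xcmax ε : ℝ) : Set (ℝ × ℝ) :=
  {ux ∈ Gen xmax | ux.2 ≤ xcmax + ε}

open Set Filter Topology in
lemma key_mono (c dp : ℝ → ℝ) (w p x D X : ℝ)
    (hx : 0 < x) (hxD : x ≤ D) (hDX : D ≤ X)
    (hcont : ContinuousOn c (Set.Icc 0 X))
    (hdp : ∀ y, 0 < y → y < X → HasDerivWithinAt c (dp y) (Set.Icc y X) y)
    (havg : ∀ y ∈ Set.Ioc (0:ℝ) D, dp y < (w + c y) / y)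
    (hD : p * D ≤ w + c D) :
    p * x ≤ w + c x := by
  by_contra hcon
  push_neg at hcon
  set f : ℝ → ℝ := fun y => p * y - (w + c y) with hfdef
  have hsub : Set.Icc x D ⊆ Set.Icc 0 X := Set.Icc_subset_Icc hx.le hDX
  have hfc : ContinuousOn f (Set.Icc x D) :=
    ((continuous_const.mul continuous_id).continuousOn).sub
      (continuousOn_const.add (hcont.mono hsub))
  obtain ⟨a, haI, hamax⟩ := isCompact_Icc.exists_isMaxOn ⟨x, le_refl x, hxD⟩ hfc
  have hfa : 0 < f a := by
    have h1 : 0 < f x := by simp only [hfdef]; linarith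
    exact lt_of_lt_of_le h1 (hamax ⟨le_refl x, hxD⟩)
  have hfD : f D ≤ 0 := by simp only [hfdef]; linarith
  have haD : a < D := lt_of_le_of_ne haI.2 (by rintro rfl; linarith)
  have ha0 : 0 < a := lt_of_lt_of_le hx haI.1
  have haX : a < X := lt_of_lt_of_le haD hDX
  have hdpa : dp a < p := by
    have h1 := havg a ⟨ha0, haI.2⟩
    have h2 : (w + c a) / a < p := by
      rw [div_lt_iff₀ ha0]
      have : 0 < p * a - (w + c a) := hfa
      linarith
    linarith
  have hpos : 0 < p - dp a := sub_pos.2 hdpa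
  have hder : HasDerivWithinAt f (p - dp a) (Set.Icc a D) a := by
    have h := (hdp a ha0 haX).mono (Set.Icc_subset_Icc_right hDX)
    have hw : HasDerivWithinAt (fun y => w + c y) (dp a) (Set.Icc a D) a := h.const_add w
    have hid : HasDerivWithinAt (fun y : ℝ => p * y) p (Set.Icc a D) a := by
      simpa using (hasDerivWithinAt_id a (Set.Icc a D)).const_mul p
    exact hid.sub hw
  have htend := hasDerivWithinAt_iff_tendsto_slope.mp hder
  rw [Set.Icc_diff_left] at htend
  have hnb : (𝓝[Set.Ioc a D] a).NeBot := by
    refine mem_closure_iff_nhdsWithin_neBot.mp ?_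
    rw [closure_Ioc haD.ne]
    exact ⟨le_refl a, haD.le⟩
  have hev : ∀ᶠ y in 𝓝[Set.Ioc a D] a, 0 < slope f a y :=
    htend.eventually (eventually_gt_nhds hpos)
  obtain ⟨y, hy, hymem⟩ := (hev.and eventually_mem_nhdsWithin).exists
  have hay : a < y := hymem.1
  have hfy : f a < f y := by
    have h1 : 0 < slope f a y * (y - a) := mul_pos hy (sub_pos.2 hay)
    rw [slope_def_field] at h1
    rw [div_mul_cancel₀] at h1
    · linarith
    · exact sub_ne_zero.2 (ne_of_gt hay)
  exact absurd (hamax ⟨le_trans haI.1 hay.le, hymem.2⟩) (not_le.mpr hfy)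

/-- Proposition 7: if `Î ≠ ∅` and each `ε_i` (for `i ∈ Î`) is small enough that
`d + ε_i ≤ xmax i` and `(w_i + c_i y)/y > ∂₊c_i(y)` on `(0, d + ε_i]`, then removing any
group `S ⊆ Î` of LNMGUs from the dual problem, provided `Î \ S` still contains some
element of `Î_min(ε)`, does not change the set of dual maximizers `P̄⁺(ε)`. -/
theorem stmt_6 (n : ℕ) (d : ℝ) (hd : 0 < d)
    (w xmax : Fin n → ℝ) (c : Fin n → ℝ → ℝ)
    (hxmax : ∀ i, 0 < xmax i) (hw : ∀ i, 0 ≤ w i)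
    (hconv : ∀ i, ConvexOn ℝ (Set.Icc 0 (xmax i)) (c i))
    (hmono : ∀ i, MonotoneOn (c i) (Set.Icc 0 (xmax i)))
    (hcont : ∀ i, ContinuousOn (c i) (Set.Icc 0 (xmax i)))
    (hc0 : ∀ i, c i 0 = 0)
    (hfeas : d ≤ ∑ i, xmax i)
    (dp : Fin n → ℝ → ℝ)
    (hdp : ∀ i, ∀ y, 0 < y → y < xmax i →
      HasDerivWithinAt (c i) (dp i y) (Set.Icc y (xmax i)) y)
    (Ihat : Finset (Fin n))
    (hIhat : ∀ i, i ∈ Ihat ↔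
      (d < xmax i ∧ ∀ y ∈ Set.Ioc (0 : ℝ) d, dp i y < (w i + c i y) / y))
    (hne : Ihat.Nonempty)
    (ε : Fin n → ℝ)
    (hεpos : ∀ i ∈ Ihat, 0 < ε i)
    (hεcap : ∀ i ∈ Ihat, d + ε i ≤ xmax i)
    (hεavg : ∀ i ∈ Ihat, ∀ y ∈ Set.Ioc (0 : ℝ) (d + ε i), dp i y < (w i + c i y) / y)
    (π πh : ℝ → Fin n → ℝ)
    (hπ : ∀ p i, IsGreatest ((fun ux => p * ux.2 - Cost (w i) (c i) ux) ''
        Gen (xmax i)) (π p i))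
    (hπh : ∀ p, ∀ i ∈ Ihat, IsGreatest ((fun ux => p * ux.2 - Cost (w i) (c i) ux) ''
        Ghat (xmax i) (xcmax n xmax d i) (ε i)) (πh p i))
    (S : Finset (Fin n)) (hS : S ⊆ Ihat)
    (hrem : ∃ i ∈ Ihat \ S, ∀ j ∈ Ihat,
      (w i + c i (d + ε i)) / (d + ε i) ≤ (w j + c j (d + ε j)) / (d + ε j)) :
    {p : ℝ | ∀ q, q * d - ∑ i ∈ Ihatᶜ, π q i - ∑ i ∈ Ihat \ S, πh q i
        ≤ p * d - ∑ i ∈ Ihatᶜ, π p i - ∑ i ∈ Ihat \ S, πh p i}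
      = {p : ℝ | ∀ q, q * d - ∑ i ∈ Ihatᶜ, π q i - ∑ i ∈ Ihat, πh q i
        ≤ p * d - ∑ i ∈ Ihatᶜ, π p i - ∑ i ∈ Ihat, πh p i} := by
  obtain ⟨i₀, hi₀TS, hmin⟩ := hrem
  have hi₀I : i₀ ∈ Ihat := (Finset.mem_sdiff.mp hi₀TS).1
  set ρ : ℝ := (w i₀ + c i₀ (d + ε i₀)) / (d + ε i₀) with hρdef
  have hπmono : ∀ i : Fin n, ∀ q r : ℝ, q ≤ r → π q i ≤ π r i := by
    intro i q r hqr
    obtain ⟨⟨u, x⟩, hmem, hval⟩ := (hπ q i).1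
    have hx0 : (0:ℝ) ≤ x := hmem.2.1
    have hub := (hπ r i).2 ⟨(u, x), hmem, rfl⟩
    have h1 : q * x ≤ r * x := mul_le_mul_of_nonneg_right hqr hx0
    calc π q i = q * x - Cost (w i) (c i) (u, x) := hval.symm
      _ ≤ r * x - Cost (w i) (c i) (u, x) := by linarith
      _ ≤ π r i := hub
  have hπhmono : ∀ i ∈ Ihat, ∀ q r : ℝ, q ≤ r → πh q i ≤ πh r i := by
    intro i hi q r hqr
    obtain ⟨⟨u, x⟩, hmem, hval⟩ := (hπh q i hi).1
    have hx0 : (0:ℝ) ≤ x := hmem.1.2.1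
    have hub := (hπh r i hi).2 ⟨(u, x), hmem, rfl⟩
    have h1 : q * x ≤ r * x := mul_le_mul_of_nonneg_right hqr hx0
    calc πh q i = q * x - Cost (w i) (c i) (u, x) := hval.symm
      _ ≤ r * x - Cost (w i) (c i) (u, x) := by linarith
      _ ≤ πh r i := hub
  have hπhnn : ∀ i ∈ Ihat, ∀ p : ℝ, 0 ≤ πh p i := by
    intro i hi p
    have hmem : ((0:ℝ), (0:ℝ)) ∈ Ghat (xmax i) (xcmax n xmax d i) (ε i) := by
      refine ⟨⟨Or.inl rfl, le_refl 0, by simp⟩, ?_⟩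
      have h1 := hεpos i hi
      have h2 : (0:ℝ) ≤ min d (xmax i) := le_min hd.le (hxmax i).le
      simp only [xcmax]
      linarith
    have hub := (hπh p i hi).2 ⟨(0, 0), hmem, rfl⟩
    simpa [Cost, hc0 i] using hub
  have hzero : ∀ j ∈ Ihat, ∀ p : ℝ, p ≤ (w j + c j (d + ε j)) / (d + ε j) → πh p j = 0 := by
    intro j hj p hp
    have hdj : d < xmax j := ((hIhat j).mp hj).1
    have hDpos : (0:ℝ) < d + ε j := by linarith [hεpos j hj]
    have hpD : p * (d + ε j) ≤ w j + c j (d + ε j) := (le_div_iff₀ hDpos).mp hp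
    refine le_antisymm ?_ (hπhnn j hj p)
    obtain ⟨⟨u, x⟩, hmem, hval⟩ := (hπh p j hj).1
    obtain ⟨⟨hu, hx0, hxu⟩, hxc⟩ := hmem
    have hu' : u = 0 ∨ u = 1 := hu
    have hx0' : (0:ℝ) ≤ x := hx0
    have hxu' : x ≤ u * xmax j := hxu
    have hxc' : x ≤ xcmax n xmax d j + ε j := hxc
    rw [← hval]
    show p * x - Cost (w j) (c j) (u, x) ≤ 0
    simp only [Cost]
    rcases hu' with hu1 | hu1 <;> subst hu1
    · have hx : x = 0 := le_antisymm (by simpa using hxu') hx0'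
      simp [hx, hc0 j]
    · have hxD : x ≤ d + ε j := by
        have hxe : xcmax n xmax d j = d := min_eq_left hdj.le
        rw [hxe] at hxc'
        exact hxc'
      rcases eq_or_lt_of_le hx0' with h0 | h0
      · rw [← h0]
        simp [hc0 j]
        linarith [hw j]
      · have hk := key_mono (c j) (dp j) (w j) p x (d + ε j) (xmax j) h0 hxD (hεcap j hj)
          (hcont j) (hdp j) (hεavg j hj) hpD
        linarith
  have hDpos₀ : (0:ℝ) < d + ε i₀ := by linarith [hεpos i₀ hi₀I]
  have hρD : ρ * (d + ε i₀) = w i₀ + c i₀ (d + ε i₀) := div_mul_cancel₀ _ (ne_of_gt hDpos₀)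
  have h5 : ∀ p : ℝ, p * (d + ε i₀) - (w i₀ + c i₀ (d + ε i₀)) ≤ πh p i₀ := by
    intro p
    have hdlt : d < xmax i₀ := ((hIhat i₀).mp hi₀I).1
    have hmem : ((1:ℝ), d + ε i₀) ∈ Ghat (xmax i₀) (xcmax n xmax d i₀) (ε i₀) := by
      refine ⟨⟨Or.inr rfl, hDpos₀.le, ?_⟩, ?_⟩
      · rw [one_mul]; exact hεcap i₀ hi₀I
      · simp only [xcmax, min_eq_left hdlt.le]
        exact le_rfl
    have hub := (hπh p i₀ hi₀I).2 ⟨(1, d + ε i₀), hmem, rfl⟩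
    simp only [Cost, mul_one] at hub
    exact hub
  have hmax_le : ∀ T : Finset (Fin n), T ⊆ Ihat → i₀ ∈ T → ∀ q : ℝ, ρ < q →
      q * d - ∑ i ∈ Ihatᶜ, π q i - ∑ i ∈ T, πh q i
        < ρ * d - ∑ i ∈ Ihatᶜ, π ρ i - ∑ i ∈ T, πh ρ i := by
    intro T hT hi₀T q hq
    have hA : ∑ i ∈ T, πh ρ i = 0 :=
      Finset.sum_eq_zero fun j hj => hzero j (hT hj) ρ (hmin j (hT hj))
    have hB : ∑ i ∈ Ihatᶜ, π ρ i ≤ ∑ i ∈ Ihatᶜ, π q i :=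
      Finset.sum_le_sum fun i _ => hπmono i ρ q hq.le
    have hC : πh q i₀ ≤ ∑ i ∈ T, πh q i :=
      Finset.single_le_sum (fun i hi => hπhnn i (hT hi) q) hi₀T
    have hD' := h5 q
    have hε0 := hεpos i₀ hi₀I
    nlinarith [mul_pos (sub_pos.2 hq) hε0]
  have hkey : ∀ (p : ℝ) (T U : Finset (Fin n)), T ⊆ Ihat → U ⊆ Ihat → i₀ ∈ T → i₀ ∈ U →
      (∀ q, q * d - ∑ i ∈ Ihatᶜ, π q i - ∑ i ∈ T, πh q i
        ≤ p * d - ∑ i ∈ Ihatᶜ, π p i - ∑ i ∈ T, πh p i) →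
      ∀ q, q * d - ∑ i ∈ Ihatᶜ, π q i - ∑ i ∈ U, πh q i
        ≤ p * d - ∑ i ∈ Ihatᶜ, π p i - ∑ i ∈ U, πh p i := by
    intro p T U hT hU hiT hiU hp q
    have hpρ : p ≤ ρ := by
      by_contra h
      push_neg at h
      exact absurd (hp ρ) (not_le.mpr (hmax_le T hT hiT p h))
    have hzT : ∀ r : ℝ, r ≤ ρ → ∀ V : Finset (Fin n), V ⊆ Ihat → ∑ i ∈ V, πh r i = 0 :=
      fun r hr V hV => Finset.sum_eq_zero fun j hj =>
        hzero j (hV hj) r (hr.trans (hmin j (hV hj)))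
    rcases le_or_gt q ρ with hqρ | hqρ
    · have e1 := hzT q hqρ T hT
      have e2 := hzT q hqρ U hU
      have e3 := hzT p hpρ T hT
      have e4 := hzT p hpρ U hU
      have h1 := hp q
      linarith
    · have h1 := hmax_le U hU hiU q hqρ
      have h2 := hp ρ
      have e1 := hzT ρ le_rfl T hT
      have e2 := hzT ρ le_rfl U hU
      have e3 := hzT p hpρ T hT
      have e4 := hzT p hpρ U hU
      linarith
  ext p
  simp only [Set.mem_setOf_eq]
  constructor
  · intro hp
    exact hkey p (Ihat \ S) Ihat Finset.sdiff_subset Finset.Subset.rfl hi₀TS hi₀I hp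
  · intro hp
    exact hkey p Ihat (Ihat \ S) Finset.Subset.rfl Finset.sdiff_subset hi₀I hi₀TS hp
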